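/- Let J and N be finite groups of coprime order with N nilpotent (hence solvable), and let J act on N by automorphisms. Then the first nonabelian cohomology set H¹(J, N) is trivial; equivalently, any two complements of N in N ⋊ J are conjugate by an element of N. -/

import Mathlib

open Subgroup QuotientGroup

section helpers

variable {N : Type*} [Group N]

lemma memZ (e : MulAut N) {x : N} (hx : x ∈ center N) : e x ∈ center N := by
  rw [Subgroup.mem_center_iff] at hx ⊢
  intro g
  obtain ⟨y, rfl⟩ := e.surjective g
  rw [← map_mul, ← map_mul, hx]

lemma map_centerZ (e : MulAut N) : Subgroup.map (↑(e : N ≃* N)) (center N) = center N := by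
  apply le_antisymm
  · rintro x ⟨y, hy, rfl⟩
    exact memZ e hy
  · intro x hx
    exact ⟨e⁻¹ x, memZ e⁻¹ hx, by simp⟩

/-- restriction of an automorphism to the center -/
def centerAut (e : MulAut N) : MulAut (center N) where
  toFun x := ⟨e x, memZ e x.2⟩
  invFun x := ⟨e⁻¹ x, memZ e⁻¹ x.2⟩
  left_inv x := by ext; simp
  right_inv x := by ext; simp
  map_mul' x y := by ext; simp

@[simp] lemma centerAut_coe (e : MulAut N) (x : center N) :
    (centerAut e x : N) = e x := rfl

/-- restriction of the action to the center -/
def centerHom {J : Type*} [Group J] (φ : J →* MulAut N) : J →* MulAut (center N) where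
  toFun j := centerAut (φ j)
  map_one' := by ext x; simp
  map_mul' j j' := by ext x; simp

@[simp] lemma centerHom_coe {J : Type*} [Group J] (φ : J →* MulAut N) (j : J) (x : center N) :
    (centerHom φ j x : N) = φ j x := rfl

/-- induced action on the quotient by the center -/
def quotAut {J : Type*} [Group J] (φ : J →* MulAut N) : J →* MulAut (N ⧸ center N) where
  toFun j := QuotientGroup.congr (center N) (center N) (φ j : N ≃* N) (map_centerZ (φ j))
  map_one' := by
    ext x
    induction x using QuotientGroup.induction_on with
    | H x => simp [QuotientGroup.congr_mk]
  map_mul' j j' := by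
    ext x
    induction x using QuotientGroup.induction_on with
    | H x => simp [QuotientGroup.congr_mk]

@[simp] lemma quotAut_mk {J : Type*} [Group J] (φ : J →* MulAut N) (j : J) (x : N) :
    quotAut φ j (QuotientGroup.mk x) = QuotientGroup.mk (φ j x) :=
  QuotientGroup.congr_mk _ _ _ (map_centerZ (φ j)) x

end helpers

/-- abelian case of vanishing of H¹ -/
lemma aux_abelian {J N : Type*} [Group J] [Finite J] [CommGroup N] [Finite N]
    (hcop : Nat.Coprime (Nat.card J) (Nat.card N))
    (φ : J →* MulAut N) (f : J → N)
    (hf : ∀ j j', f (j * j') = f j * φ j (f j')) :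
    ∃ n : N, ∀ j, f j = n⁻¹ * φ j n := by
  rcases subsingleton_or_nontrivial N with hN | hN
  · exact ⟨1, fun j => Subsingleton.elim _ _⟩
  have h1 : 1 < Nat.card N := Finite.one_lt_card
  obtain ⟨k, -, hk⟩ := Nat.exists_mul_mod_eq_one_of_coprime hcop h1
  haveI := Fintype.ofFinite J
  set S : N := ∏ j : J, f j with hS
  have key : ∀ j, f j ^ (Nat.card J) = S * (φ j S)⁻¹ := by
    intro j
    have h2 : ∏ j' : J, f (j * j') = S := by
      exact Fintype.prod_equiv (Equiv.mulLeft j) _ f (fun j' => rfl)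
    have h3 : ∏ j' : J, f (j * j') = f j ^ (Nat.card J) * φ j S := by
      simp only [hf]
      rw [Finset.prod_mul_distrib, Finset.prod_const, map_prod]
      simp [Nat.card_eq_fintype_card]
    rw [h3] at h2
    exact eq_mul_inv_of_mul_eq h2
  have hpow : ∀ j, f j = (f j ^ Nat.card J) ^ k := by
    intro j
    have hd : Nat.card N * (Nat.card J * k / Nat.card N) + 1 = Nat.card J * k := by
      conv_rhs => rw [← Nat.div_add_mod (Nat.card J * k) (Nat.card N)]
      rw [hk]
    rw [← pow_mul, ← hd, pow_add, pow_mul, pow_card_eq_one', one_pow, pow_one, one_mul]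
  refine ⟨(S ^ k)⁻¹, fun j => ?_⟩
  rw [hpow j, key j, mul_pow, inv_inv, map_inv, map_pow, inv_pow]

def Pred (J : Type*) [Group J] [Finite J] (G : Type*) [Group G] : Prop :=
  Finite G → (Nat.card J).Coprime (Nat.card G) →
    ∀ (φ : J →* MulAut G) (f : J → G),
      (∀ j j', f (j * j') = f j * φ j (f j')) →
      ∃ n : G, ∀ j, f j = n⁻¹ * φ j n

lemma aux_nilpotent {J : Type*} [Group J] [Finite J] (N : Type*) [Group N]
    [Group.IsNilpotent N] : Pred J N := by
  refine nilpotent_center_quotient_ind (P := fun G hG _ => @Pred J _ _ G hG) N ?_ ?_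
  · intro G _ _ _ _ φ f hf
    exact ⟨1, fun j => Subsingleton.elim _ _⟩
  · intro G _ _ ih hfin hcop φ f hf
    -- coprimality for the quotient
    have hdvdQ : Nat.card (G ⧸ center G) ∣ Nat.card G :=
      ⟨Nat.card (center G), Subgroup.card_eq_card_quotient_mul_card_subgroup (center G)⟩
    have hcopQ := hcop.coprime_dvd_right hdvdQ
    have hfbar : ∀ j j', (QuotientGroup.mk (f (j * j')) : G ⧸ center G) =
        QuotientGroup.mk (f j) * quotAut φ j (QuotientGroup.mk (f j')) := by
      intro j j'
      simp [hf]
    obtain ⟨nb, hnb⟩ := ih inferInstance hcopQ (quotAut φ)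
      (fun j => QuotientGroup.mk (f j)) hfbar
    obtain ⟨n, rfl⟩ := QuotientGroup.mk_surjective nb
    -- the corrected cocycle lands in the center
    have hg : ∀ j, n * f j * φ j n⁻¹ ∈ center G := by
      intro j
      rw [← QuotientGroup.eq_one_iff]
      have h := hnb j
      simp only [quotAut_mk] at h
      calc (QuotientGroup.mk (n * f j * φ j n⁻¹) : G ⧸ center G)
          = QuotientGroup.mk n * QuotientGroup.mk (f j) *
            (quotAut φ j (QuotientGroup.mk n))⁻¹ := by simp
        _ = 1 := by rw [h, quotAut_mk]; group
    set g : J → center G := fun j => ⟨n * f j * φ j n⁻¹, hg j⟩ with hgdef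
    have hgc : ∀ j j', g (j * j') = g j * centerHom φ j (g j') := by
      intro j j'
      ext
      show n * f (j * j') * φ (j * j') n⁻¹ =
        (n * f j * φ j n⁻¹) * φ j (n * f j' * φ j' n⁻¹)
      simp only [hf, map_mul, map_inv, MulAut.mul_apply]
      group
    have hdvdZ : Nat.card (center G) ∣ Nat.card G := Subgroup.card_subgroup_dvd_card _
    letI : CommGroup (center G) := { (inferInstance : Group (center G)) with mul_comm := mul_comm' }
    obtain ⟨m, hm⟩ := aux_abelian (hcop.coprime_dvd_right hdvdZ) (centerHom φ) g hgc
    refine ⟨(m : G) * n, fun j => ?_⟩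
    have h1 : n * f j * φ j n⁻¹ = (m : G)⁻¹ * φ j (m : G) := by
      have := congrArg (Subtype.val) (hm j)
      simpa [hgdef] using this
    have h2 : f j = n⁻¹ * ((m : G)⁻¹ * φ j (m : G)) * φ j n := by
      rw [← h1, map_inv]; group
    rw [h2, mul_inv_rev, map_mul]
    simp only [mul_assoc]

theorem stmt_6 {N J : Type*} [Group N] [Group J] [Finite N] [Finite J]
    [Group.IsNilpotent N]
    (hcop : Nat.Coprime (Nat.card J) (Nat.card N))
    (φ : J →* MulAut N) (f : J → N)
    (hf : ∀ j j', f (j * j') = f j * φ j (f j')) :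
    ∃ n : N, ∀ j, f j = n⁻¹ * φ j n :=
  aux_nilpotent N inferInstance hcop φ f hf
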